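/- Value of the geometric action on an uphill–downhill path through a saddle: let U : ℝ^d → ℝ be continuously differentiable, let φ : [0,1] → ℝ^d be continuously differentiable, and suppose there is s* ∈ [0,1] such that ⟨∇U(φ(s)), φ'(s)⟩ = ‖∇U(φ(s))‖·‖φ'(s)‖ for all s ∈ [0, s*] (uphill part) and ⟨∇U(φ(s)), φ'(s)⟩ = −‖∇U(φ(s))‖·‖φ'(s)‖ for all s ∈ [s*, 1] (downhill part). Then I_g[φ] = ∫₀¹ ‖∇U(φ(s))‖·‖φ'(s)‖ ds = 2·U(φ(s*)) − U(φ(0)) − U(φ(1)). In particular, if φ(0) and φ(1) have the same potential value U₀ and φ(s*) is the saddle, the action equals twice the energy barrier 2(U(φ(s*)) − U₀). -/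

import Mathlib

open Set Filter MeasureTheory
open scoped RealInnerProductSpace

/-- Value of the geometric action on an uphill–downhill path through a saddle:
if the gradient is positively aligned with the tangent on `[0,s⋆]` and
anti-aligned on `[s⋆,1]`, then
`I_g[φ] = ∫₀¹ ‖∇U(φ)‖‖φ'‖ ds = 2·U(φ(s⋆)) − U(φ(0)) − U(φ(1))`. -/
theorem scalar_work_uphill_downhill {d : ℕ}
    (U : EuclideanSpace ℝ (Fin d) → ℝ)
    (gradU : EuclideanSpace ℝ (Fin d) → EuclideanSpace ℝ (Fin d))
    (hgrad : ∀ x, HasGradientAt U (gradU x) x)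
    (hgradc : Continuous gradU)
    (φ φ' : ℝ → EuclideanSpace ℝ (Fin d))
    (hφ : ∀ s ∈ Icc (0:ℝ) 1, HasDerivAt φ (φ' s) s)
    (hφ'c : ContinuousOn φ' (Icc 0 1))
    (sstar : ℝ) (hsstar : sstar ∈ Icc (0:ℝ) 1)
    (hup : ∀ s ∈ Icc (0:ℝ) sstar, ⟪gradU (φ s), φ' s⟫ = ‖gradU (φ s)‖ * ‖φ' s‖)
    (hdown : ∀ s ∈ Icc sstar (1:ℝ), ⟪gradU (φ s), φ' s⟫ = -(‖gradU (φ s)‖ * ‖φ' s‖)) :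
    (∫ s in (0:ℝ)..1, ‖gradU (φ s)‖ * ‖φ' s‖) =
      2 * U (φ sstar) - U (φ 0) - U (φ 1) := by
  obtain ⟨hs0, hs1⟩ := hsstar
  have hφc : ContinuousOn φ (Icc 0 1) := fun s hs =>
    (hφ s hs).continuousAt.continuousWithinAt
  -- continuity of the integrand
  have hcont : ContinuousOn (fun s => ‖gradU (φ s)‖ * ‖φ' s‖) (Icc 0 1) :=
    ((hgradc.comp_continuousOn hφc).norm).mul hφ'c.norm
  -- derivative of U ∘ φ
  have hderiv : ∀ s ∈ Icc (0:ℝ) 1,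
      HasDerivAt (fun t => U (φ t)) (⟪gradU (φ s), φ' s⟫) s := by
    intro s hs
    have h1 := (hgrad (φ s)).hasFDerivAt.comp_hasDerivAt s (hφ s hs)
    exact h1
  have hsub1 : Icc (0:ℝ) sstar ⊆ Icc 0 1 := Icc_subset_Icc le_rfl hs1
  have hsub2 : Icc sstar (1:ℝ) ⊆ Icc 0 1 := Icc_subset_Icc hs0 le_rfl
  -- integral on [0, sstar]
  have hI1 : (∫ s in (0:ℝ)..sstar, ‖gradU (φ s)‖ * ‖φ' s‖)
      = U (φ sstar) - U (φ 0) := by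
    rw [intervalIntegral.integral_congr (g := fun s => ⟪gradU (φ s), φ' s⟫)
      (by intro s hs; rw [uIcc_of_le hs0] at hs; exact (hup s hs).symm)]
    apply intervalIntegral.integral_eq_sub_of_hasDerivAt
    · intro s hs
      rw [uIcc_of_le hs0] at hs
      exact hderiv s (hsub1 hs)
    · apply ContinuousOn.intervalIntegrable
      rw [uIcc_of_le hs0]
      exact (hcont.mono hsub1).congr fun t ht => hup t ht
  -- integral on [sstar, 1]
  have hI2 : (∫ s in sstar..(1:ℝ), ‖gradU (φ s)‖ * ‖φ' s‖)
      = -(U (φ 1) - U (φ sstar)) := by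
    have : (∫ s in sstar..(1:ℝ), ‖gradU (φ s)‖ * ‖φ' s‖)
        = ∫ s in sstar..(1:ℝ), -⟪gradU (φ s), φ' s⟫ := by
      apply intervalIntegral.integral_congr
      intro s hs
      rw [uIcc_of_le hs1] at hs
      show ‖gradU (φ s)‖ * ‖φ' s‖ = -⟪gradU (φ s), φ' s⟫
      rw [hdown s hs]; ring
    rw [this, intervalIntegral.integral_neg]
    congr 1
    apply intervalIntegral.integral_eq_sub_of_hasDerivAt (f := fun t => U (φ t))
    · intro s hs
      rw [uIcc_of_le hs1] at hs
      exact hderiv s (hsub2 hs)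
    · apply ContinuousOn.intervalIntegrable
      rw [uIcc_of_le hs1]
      intro s hs
      have heq : EqOn (fun s => ⟪gradU (φ s), φ' s⟫)
          (fun s => -(‖gradU (φ s)‖ * ‖φ' s‖)) (Icc sstar 1) := fun t ht => hdown t ht
      exact ((hcont.neg.mono hsub2).congr heq) s hs
  -- combine
  have hsplit : (∫ s in (0:ℝ)..1, ‖gradU (φ s)‖ * ‖φ' s‖)
      = (∫ s in (0:ℝ)..sstar, ‖gradU (φ s)‖ * ‖φ' s‖)
        + ∫ s in sstar..(1:ℝ), ‖gradU (φ s)‖ * ‖φ' s‖ := by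
    rw [intervalIntegral.integral_add_adjacent_intervals]
    · apply ContinuousOn.intervalIntegrable
      rw [uIcc_of_le hs0]
      exact hcont.mono hsub1
    · apply ContinuousOn.intervalIntegrable
      rw [uIcc_of_le hs1]
      exact hcont.mono hsub2
  rw [hsplit, hI1, hI2]; ring
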